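/- If g is P-bounded and L-Lipschitz with flow φ, then the global error of N backward Euler steps with step size θ = h/N satisfies ‖φ(−h, x) − φ_E(−h, x)‖ ≤ (P h / (2N)) (e^{Lh} − 1) for all x ∈ ℝ^d. -/

import Mathlib

open Set Real intervalIntegral

/-- If `g` is `P`-bounded and `L`-Lipschitz with flow `φ`, the global error of `N`
backward Euler steps of size `θ = h/N` satisfies
`‖φ(-h, x) - φ_E(-h, x)‖ ≤ (P h / (2N)) (e^{Lh} - 1)`. -/
theorem euler_global_error (d : ℕ)
    (g : EuclideanSpace ℝ (Fin d) → EuclideanSpace ℝ (Fin d))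
    (φ : ℝ → EuclideanSpace ℝ (Fin d) → EuclideanSpace ℝ (Fin d))
    (P L : ℝ) (hP : ∀ x, ‖g x‖ ≤ P) (hL : 0 ≤ L)
    (hg : ∀ x y, ‖g x - g y‖ ≤ L * ‖x - y‖)
    (hφ0 : ∀ x, φ 0 x = x)
    (hφadd : ∀ s t x, φ (s + t) x = φ s (φ t x))
    (hderiv : ∀ (t : ℝ) (x : EuclideanSpace ℝ (Fin d)),
      HasDerivAt (fun s => φ s x) (g (φ t x)) t)
    (h : ℝ) (hh : 0 < h) (N : ℕ) (hN : 0 < N) :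
    ∀ x : EuclideanSpace ℝ (Fin d),
      ‖φ (-h) x - (fun y => y - (h / N) • g y)^[N] x‖
        ≤ (P * h / (2 * N)) * (Real.exp (L * h) - 1) := by
  intro x
  have hN' : (0:ℝ) < N := by exact_mod_cast hN
  set θ : ℝ := h / N with hθdef
  have hθ : 0 < θ := div_pos hh hN'
  have hP0 : 0 ≤ P := le_trans (norm_nonneg _) (hP 0)
  set F : EuclideanSpace ℝ (Fin d) → EuclideanSpace ℝ (Fin d) :=
    fun y => y - θ • g y with hF
  -- derivative of `s ↦ φ (-s) y`
  have hderiv' : ∀ (t : ℝ) y, HasDerivAt (fun s => φ (-s) y) (-(g (φ (-t) y))) t := by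
    intro t y
    have h1 := (hderiv (-t) y).scomp t (hasDerivAt_neg t)
    simpa [Function.comp_def] using h1
  have hcont : ∀ y, Continuous (fun s => φ (-s) y) := fun y =>
    continuous_iff_continuousAt.2 fun t => (hderiv' t y).continuousAt
  -- ‖φ (-s) y - y‖ ≤ P * s for 0 ≤ s
  have hdist : ∀ y, ∀ s ∈ Icc (0:ℝ) θ, ‖φ (-s) y - y‖ ≤ P * s := by
    intro y s hs
    have H := norm_le_gronwallBound_of_norm_deriv_right_le
      (f := fun u => φ (-u) y - y) (f' := fun u => -(g (φ (-u) y)))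
      (a := 0) (b := θ) (δ := 0) (K := 0) (ε := P)
      (((hcont y).sub continuous_const).continuousOn)
      (fun u _ => ((hderiv' u y).sub_const y).hasDerivWithinAt)
      (by simp [hφ0]) (fun u _ => by simpa using hP (φ (-u) y)) s hs
    simpa [gronwallBound_K0, mul_comm] using H
  -- flow is exp-Lipschitz backward in time
  have hlip : ∀ a b, ‖φ (-θ) a - φ (-θ) b‖ ≤ Real.exp (L * θ) * ‖a - b‖ := by
    intro a b
    have H := norm_le_gronwallBound_of_norm_deriv_right_le
      (f := fun u => φ (-u) a - φ (-u) b)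
      (f' := fun u => -(g (φ (-u) a)) - -(g (φ (-u) b)))
      (a := 0) (b := θ) (δ := ‖a - b‖) (K := L) (ε := 0)
      (((hcont a).sub (hcont b)).continuousOn)
      (fun u _ => ((hderiv' u a).sub (hderiv' u b)).hasDerivWithinAt)
      (by simp [hφ0]) ?_ θ (right_mem_Icc.2 hθ.le)
    · simpa [gronwallBound_ε0, mul_comm] using H
    · intro u _
      show ‖-(g (φ (-u) a)) - -(g (φ (-u) b))‖ ≤ L * ‖φ (-u) a - φ (-u) b‖ + 0
      have h1 : -(g (φ (-u) a)) - -(g (φ (-u) b)) = g (φ (-u) b) - g (φ (-u) a) := by abel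
      rw [h1]
      calc ‖g (φ (-u) b) - g (φ (-u) a)‖ ≤ L * ‖φ (-u) b - φ (-u) a‖ := hg _ _
        _ = L * ‖φ (-u) a - φ (-u) b‖ + 0 := by rw [norm_sub_rev]; ring
  -- local truncation error
  have hloc : ∀ y, ‖φ (-θ) y - F y‖ ≤ L * P * θ ^ 2 / 2 := by
    intro y
    have hcg : Continuous g :=
      (LipschitzWith.of_dist_le_mul (K := L.toNNReal) (fun a b => by
        rw [Real.coe_toNNReal L hL]; simpa [dist_eq_norm] using hg a b)).continuous
    have hfd : ∀ u : ℝ, HasDerivAt (fun s => φ (-s) y - y + s • g y)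
        (g y - g (φ (-u) y)) u := by
      intro u
      have h1 : HasDerivAt (fun s : ℝ => s • g y) ((1:ℝ) • g y) u :=
        (hasDerivAt_id u).smul_const (g y)
      have := (((hderiv' u y).sub_const y).add h1)
      simpa [sub_eq_neg_add, one_smul, Pi.add_def] using this
    have hint : IntervalIntegrable (fun u => g y - g (φ (-u) y)) MeasureTheory.volume 0 θ :=
      (continuous_const.sub (hcg.comp (hcont y))).intervalIntegrable 0 θ
    have hftc : ∫ u in (0:ℝ)..θ, (g y - g (φ (-u) y)) =
        (φ (-θ) y - y + θ • g y) - (φ (-0) y - y + (0:ℝ) • g y) :=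
      intervalIntegral.integral_eq_sub_of_hasDerivAt (fun u _ => hfd u) hint
    have heq : φ (-θ) y - F y = ∫ u in (0:ℝ)..θ, (g y - g (φ (-u) y)) := by
      rw [hftc]
      simp [hF, hφ0]
      abel
    rw [heq]
    have hbd : ∀ u ∈ Icc (0:ℝ) θ, ‖g y - g (φ (-u) y)‖ ≤ L * P * u := by
      intro u hu
      calc ‖g y - g (φ (-u) y)‖ ≤ L * ‖y - φ (-u) y‖ := hg y (φ (-u) y)
        _ ≤ L * (P * u) := by
            rw [norm_sub_rev]
            exact mul_le_mul_of_nonneg_left (hdist y u hu) hL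
        _ = L * P * u := by ring
    have hIval : ∫ u in (0:ℝ)..θ, L * P * u = L * P * θ ^ 2 / 2 := by
      rw [intervalIntegral.integral_const_mul, integral_id]
      ring
    have hbig := intervalIntegral.norm_integral_le_abs_of_norm_le
      (f := fun u => g y - g (φ (-u) y)) (g := fun u => L * P * u)
      (μ := MeasureTheory.volume) (a := 0) (b := θ)
      (by
        filter_upwards [MeasureTheory.ae_restrict_mem measurableSet_uIoc] with u hu
        have hu' : u ∈ Icc (0:ℝ) θ := by
          rcases Set.mem_uIoc.1 hu with h1 | h1
          · exact ⟨h1.1.le, h1.2⟩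
          · exact (not_lt.2 (h1.2.trans hθ.le) h1.1).elim
        exact hbd u hu')
      ((continuous_const.mul continuous_id).intervalIntegrable 0 θ)
    rw [hIval] at hbig
    calc ‖∫ u in (0:ℝ)..θ, (g y - g (φ (-u) y))‖ ≤ |L * P * θ ^ 2 / 2| := hbig
      _ = L * P * θ ^ 2 / 2 := abs_of_nonneg (by positivity)
  -- main induction
  have key : ∀ k : ℕ, ‖φ (-(k * θ)) x - F^[k] x‖ ≤ P * θ / 2 * (Real.exp (L * (k * θ)) - 1) := by
    intro k
    induction k with
    | zero => simp [hφ0]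
    | succ k ih =>
      have hstep : φ (-((k+1 : ℕ) * θ)) x = φ (-θ) (φ (-(k * θ)) x) := by
        rw [← hφadd]
        norm_num
        ring_nf
      have hiter : F^[k+1] x = F (F^[k] x) := Function.iterate_succ_apply' F k x
      rw [hstep, hiter]
      calc ‖φ (-θ) (φ (-(k * θ)) x) - F (F^[k] x)‖
          ≤ ‖φ (-θ) (φ (-(k * θ)) x) - φ (-θ) (F^[k] x)‖ + ‖φ (-θ) (F^[k] x) - F (F^[k] x)‖ := by
            simpa using norm_sub_le_norm_sub_add_norm_sub _ (φ (-θ) (F^[k] x)) _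
        _ ≤ Real.exp (L * θ) * ‖φ (-(k * θ)) x - F^[k] x‖ + L * P * θ ^ 2 / 2 :=
            add_le_add (hlip _ _) (hloc _)
        _ ≤ Real.exp (L * θ) * (P * θ / 2 * (Real.exp (L * (k * θ)) - 1)) + L * P * θ ^ 2 / 2 := by
            gcongr
        _ ≤ P * θ / 2 * (Real.exp (L * ((k+1 : ℕ) * θ)) - 1) := by
            have h1 : Real.exp (L * θ) * Real.exp (L * (k * θ)) = Real.exp (L * ((k+1:ℕ) * θ)) := by
              rw [← Real.exp_add]
              push_cast
              ring_nf
            have h2 : L * θ + 1 ≤ Real.exp (L * θ) := Real.add_one_le_exp _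
            nlinarith [mul_nonneg hP0 hθ.le, mul_nonneg (mul_nonneg hP0 hθ.le) hθ.le,
              Real.exp_pos (L * (k * θ))]
  have := key N
  have hNθ : (N : ℝ) * θ = h := by rw [hθdef]; field_simp [hN'.ne']
  rw [hNθ] at this
  calc ‖φ (-h) x - (fun y => y - (h / N) • g y)^[N] x‖
      = ‖φ (-h) x - F^[N] x‖ := by rw [hF, hθdef]
    _ ≤ P * θ / 2 * (Real.exp (L * h) - 1) := this
    _ = P * h / (2 * N) * (Real.exp (L * h) - 1) := by
        rw [hθdef]; ring
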